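/- Let ν > 0 and a > 0, and let u : ℝ → ℝ be twice differentiable on the interval (a, a+π), not identically zero on (a, a+π), and satisfy u''(r) + (1 − ν/r²)·u(r) = 0 for all r ∈ (a, a+π). Then u has at most one zero in (a, a+π), i.e., there do not exist z₁ ≠ z₂ in (a, a+π) with u(z₁) = u(z₂) = 0. -/

import Mathlib

open Set Real Filter in
private lemma gronwall_right (K : ℝ) (g g' : ℝ → ℝ) (s t : ℝ) (hst : s ≤ t)
    (hd : ∀ r ∈ Set.Icc s t, HasDerivAt g (g' r) r)
    (hb : ∀ r ∈ Set.Icc s t, g' r ≤ K * g r)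
    (hg0 : ∀ r ∈ Set.Icc s t, 0 ≤ g r)
    (hgs : g s = 0) : g t = 0 := by
  set φ : ℝ → ℝ := fun r => g r * Real.exp (-K * r) with hφ
  have hφd : ∀ r ∈ Set.Icc s t, HasDerivAt φ (g' r * Real.exp (-K*r) + g r * (Real.exp (-K*r) * -K)) r := by
    intro r hr
    have h1 : HasDerivAt (fun r : ℝ => -K * r) (-K) r := by
      simpa using (hasDerivAt_id r).const_mul (-K)
    have h2 : HasDerivAt (fun r : ℝ => Real.exp (-K * r)) (Real.exp (-K*r) * -K) r :=
      (Real.hasDerivAt_exp (-K*r)).comp r h1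
    exact (hd r hr).mul h2
  have hanti : AntitoneOn φ (Set.Icc s t) := by
    apply antitoneOn_of_deriv_nonpos (convex_Icc s t)
    · exact fun r hr => (hφd r hr).continuousAt.continuousWithinAt
    · intro r hr
      rw [interior_Icc] at hr
      exact ((hφd r (Set.Ioo_subset_Icc_self hr)).differentiableAt).differentiableWithinAt
    · intro r hr
      rw [interior_Icc] at hr
      have hr' := Set.Ioo_subset_Icc_self hr
      rw [(hφd r hr').deriv]
      have h3 := hb r hr'
      have h4 : (0:ℝ) < Real.exp (-K*r) := Real.exp_pos _
      nlinarith [mul_le_mul_of_nonneg_right h3 h4.le]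
  have h5 : φ t ≤ φ s :=
    hanti (Set.mem_Icc.mpr ⟨le_refl s, hst⟩) (Set.mem_Icc.mpr ⟨hst, le_refl t⟩) hst
  have h6 : φ s = 0 := by simp [hφ, hgs]
  have h7 : 0 ≤ g t := hg0 t (Set.mem_Icc.mpr ⟨hst, le_refl t⟩)
  have h8 : (0:ℝ) < Real.exp (-K * t) := Real.exp_pos _
  by_contra hne
  have h9 : 0 < g t := lt_of_le_of_ne h7 (Ne.symm hne)
  have h10 : φ t ≤ 0 := h6 ▸ h5
  simp only [hφ] at h10
  nlinarith [mul_pos h9 h8]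

open Set Real Filter in
private lemma aux0 (ν a : ℝ) (hν : 0 < ν) (ha : 0 < a) (u u' u'' : ℝ → ℝ)
    (hu : ∀ r ∈ Set.Ioo a (a + Real.pi), HasDerivAt u (u' r) r)
    (hu' : ∀ r ∈ Set.Ioo a (a + Real.pi), HasDerivAt u' (u'' r) r)
    (heq : ∀ r ∈ Set.Ioo a (a + Real.pi), u'' r + (1 - ν / r^2) * u r = 0)
    (z : ℝ) (hz : z ∈ Set.Ioo a (a + Real.pi)) (huz : u z = 0) (hu'z : u' z = 0) :
    ∀ r ∈ Set.Ioo a (a + Real.pi), u r = 0 := by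
  have hgd : ∀ r ∈ Set.Ioo a (a + Real.pi),
      HasDerivAt (fun r => (u r)^2 + (u' r)^2) (2 * u r * u' r * (ν / r^2)) r := by
    intro r hr
    have h1 : HasDerivAt (fun r => (u r)^2 + (u' r)^2) (2 * u r * u' r + 2 * u' r * u'' r) r := by
      have := ((hu r hr).pow 2).add ((hu' r hr).pow 2)
      exact this.congr_deriv (by ring)
    convert h1 using 1
    have he : u'' r = -(1 - ν / r^2) * u r := by linarith [heq r hr]
    rw [he]; ring
  have hbb : ∀ r ∈ Set.Ioo a (a + Real.pi),
      |2 * u r * u' r * (ν / r^2)| ≤ (ν / a^2) * ((u r)^2 + (u' r)^2) := by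
    intro r hr
    have hra : a < r := hr.1
    have hr0 : (0:ℝ) < r := lt_trans ha hra
    have hc : (0:ℝ) < ν / r^2 := div_pos hν (pow_pos hr0 2)
    have hcK : ν / r^2 ≤ ν / a^2 :=
      div_le_div_of_nonneg_left hν.le (pow_pos ha 2) (by nlinarith)
    have hgr : (0:ℝ) ≤ (u r)^2 + (u' r)^2 := by positivity
    rw [abs_le]
    constructor
    · nlinarith [mul_nonneg (sq_nonneg (u r + u' r)) hc.le,
        mul_le_mul_of_nonneg_left hcK hgr]
    · nlinarith [mul_nonneg (sq_nonneg (u r - u' r)) hc.le,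
        mul_le_mul_of_nonneg_left hcK hgr]
  intro r₀ hr₀
  have key : (u r₀)^2 + (u' r₀)^2 = 0 := by
    rcases le_total z r₀ with h | h
    · have hsub : Set.Icc z r₀ ⊆ Set.Ioo a (a + Real.pi) :=
        Set.Icc_subset_Ioo hz.1 hr₀.2
      apply gronwall_right (ν / a^2) (fun r => (u r)^2 + (u' r)^2)
        (fun r => 2 * u r * u' r * (ν / r^2)) z r₀ h
        (fun r hr => hgd r (hsub hr))
        (fun r hr => le_trans (le_abs_self _) (hbb r (hsub hr)))
        (fun r hr => by positivity)
      simp [huz, hu'z]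
    · have hsub : Set.Icc r₀ z ⊆ Set.Ioo a (a + Real.pi) :=
        Set.Icc_subset_Ioo hr₀.1 hz.2
      have step := gronwall_right (ν / a^2) (fun r => (u (-r))^2 + (u' (-r))^2)
        (fun r => -(2 * u (-r) * u' (-r) * (ν / (-r)^2))) (-z) (-r₀)
        (by linarith)
        (by
          intro r hr
          have hmem : -r ∈ Set.Icc r₀ z := by
            simp only [Set.mem_Icc] at hr ⊢
            constructor <;> linarith [hr.1, hr.2]
          have := (hgd (-r) (hsub hmem)).comp r (hasDerivAt_neg r)
          simpa [Function.comp_def] using this)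
        (by
          intro r hr
          have hmem : -r ∈ Set.Icc r₀ z := by
            simp only [Set.mem_Icc] at hr ⊢
            constructor <;> linarith [hr.1, hr.2]
          have h1 := hbb (-r) (hsub hmem)
          show -(2 * u (-r) * u' (-r) * (ν / (-r)^2)) ≤ ν / a^2 * ((u (-r))^2 + (u' (-r))^2)
          rw [abs_le] at h1
          linarith [h1.1])
        (fun r hr => by positivity)
        (by simp [huz, hu'z])
      simpa using step
  have h2 : (u r₀)^2 = 0 := by nlinarith [sq_nonneg (u r₀), sq_nonneg (u' r₀)]
  exact pow_eq_zero_iff (two_ne_zero) |>.mp h2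

open Set Real Filter in
private lemma aux1 (ν : ℝ) (hν : 0 < ν) (b d : ℝ) (hbd : b < d) (hdπ : d - b < Real.pi)
    (hb : 0 < b) (u u' u'' : ℝ → ℝ)
    (hu : ∀ r ∈ Set.Icc b d, HasDerivAt u (u' r) r)
    (hu' : ∀ r ∈ Set.Icc b d, HasDerivAt u' (u'' r) r)
    (heq : ∀ r ∈ Set.Icc b d, u'' r + (1 - ν / r^2) * u r = 0)
    (hub : u b = 0) (hud : u d = 0)
    (hpos : ∀ r ∈ Set.Ioo b d, 0 < u r) : False := by
  set W : ℝ → ℝ := fun r => u' r * Real.sin (r - b) - u r * Real.cos (r - b) with hW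
  have hWd : ∀ r ∈ Set.Icc b d,
      HasDerivAt W ((ν / r^2) * (u r * Real.sin (r - b))) r := by
    intro r hr
    have hs : HasDerivAt (fun r : ℝ => Real.sin (r - b)) (Real.cos (r - b)) r := by
      simpa [Function.comp_def] using (Real.hasDerivAt_sin (r - b)).comp r ((hasDerivAt_id r).sub_const b)
    have hc : HasDerivAt (fun r : ℝ => Real.cos (r - b)) (-Real.sin (r - b)) r := by
      simpa [Function.comp_def] using (Real.hasDerivAt_cos (r - b)).comp r ((hasDerivAt_id r).sub_const b)
    have h1 : HasDerivAt W
        ((u'' r * Real.sin (r - b) + u' r * Real.cos (r - b)) -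
          (u' r * Real.cos (r - b) + u r * (-Real.sin (r - b)))) r :=
      ((hu' r hr).mul hs).sub ((hu r hr).mul hc)
    convert h1 using 1
    have he : u'' r = -(1 - ν / r^2) * u r := by linarith [heq r hr]
    rw [he]; ring
  have hmono : StrictMonoOn W (Set.Icc b d) := by
    apply strictMonoOn_of_deriv_pos (convex_Icc b d)
    · exact fun r hr => (hWd r hr).continuousAt.continuousWithinAt
    · intro r hr
      rw [interior_Icc] at hr
      rw [(hWd r (Set.Ioo_subset_Icc_self hr)).deriv]
      have hr0 : (0:ℝ) < r := lt_trans hb hr.1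
      have h2 : 0 < ν / r^2 := div_pos hν (pow_pos hr0 2)
      have h3 : 0 < u r := hpos r hr
      have h4 : 0 < Real.sin (r - b) := Real.sin_pos_of_pos_of_lt_pi
        (by linarith [hr.1]) (by linarith [hr.2])
      positivity
  have hWb : W b = 0 := by simp [hW, hub]
  have hWlt : W b < W d := hmono (Set.mem_Icc.mpr ⟨le_refl b, hbd.le⟩)
    (Set.mem_Icc.mpr ⟨hbd.le, le_refl d⟩) hbd
  have hWdval : W d = u' d * Real.sin (d - b) := by simp [hW, hud]
  have hsin : 0 < Real.sin (d - b) := Real.sin_pos_of_pos_of_lt_pi (by linarith) hdπ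
  -- u' d ≤ 0 via slopes from the left
  have hud' : u' d ≤ 0 := by
    have hslope : Tendsto (slope u d) (nhdsWithin d (Set.Iio d)) (nhds (u' d)) :=
      (hasDerivAt_iff_tendsto_slope.mp (hu d (Set.mem_Icc.mpr ⟨hbd.le, le_refl d⟩))).mono_left
        (nhdsWithin_mono d (fun x hx => ne_of_lt hx))
    have hev : ∀ᶠ r in nhdsWithin d (Set.Iio d), slope u d r ≤ 0 := by
      filter_upwards [Ioo_mem_nhdsLT_of_mem (Set.mem_Ioc.mpr ⟨hbd, le_refl d⟩)] with r hr
      have h5 : 0 < u r := hpos r hr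
      have h6 : r - d < 0 := by linarith [hr.2]
      rw [slope_def_field, hud]
      apply div_nonpos_of_nonneg_of_nonpos <;> linarith
    exact le_of_tendsto hslope hev
  nlinarith [hWb, hWlt, hWdval, mul_nonpos_of_nonpos_of_nonneg hud' hsin.le]

open Set Real Filter in
private lemma ordered_case (ν a : ℝ) (hν : 0 < ν) (ha : 0 < a) (u u' u'' : ℝ → ℝ)
    (hu : ∀ r ∈ Set.Ioo a (a + Real.pi), HasDerivAt u (u' r) r)
    (hu' : ∀ r ∈ Set.Ioo a (a + Real.pi), HasDerivAt u' (u'' r) r)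
    (heq : ∀ r ∈ Set.Ioo a (a + Real.pi), u'' r + (1 - ν / r^2) * u r = 0)
    (hnz : ∃ r ∈ Set.Ioo a (a + Real.pi), u r ≠ 0)
    (z₁ z₂ : ℝ) (hz₁ : z₁ ∈ Set.Ioo a (a + Real.pi)) (hz₂ : z₂ ∈ Set.Ioo a (a + Real.pi))
    (hlt : z₁ < z₂) (h1 : u z₁ = 0) (h2 : u z₂ = 0) : False := by
  obtain ⟨r₀, hr₀, hur₀⟩ := hnz
  set T : Set ℝ := {r | r ∈ Set.Ico z₁ z₂ ∧ u r = 0} with hT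
  have hTne : z₁ ∈ T := ⟨Set.mem_Ico.mpr ⟨le_refl z₁, hlt⟩, h1⟩
  have hTbdd : BddAbove T := ⟨z₂, fun x hx => hx.1.2.le⟩
  set c := sSup T with hc
  have hcge : z₁ ≤ c := le_csSup hTbdd hTne
  have hcle : c ≤ z₂ := csSup_le ⟨z₁, hTne⟩ (fun x hx => hx.1.2.le)
  have hcI : c ∈ Set.Ioo a (a + Real.pi) :=
    ⟨lt_of_lt_of_le hz₁.1 hcge, lt_of_le_of_lt hcle hz₂.2⟩
  have hsubI : Set.Icc z₁ z₂ ⊆ Set.Ioo a (a + Real.pi) := Set.Icc_subset_Ioo hz₁.1 hz₂.2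
  have hcont : ContinuousOn u (Set.Icc z₁ z₂) :=
    fun r hr => ((hu r (hsubI hr)).continuousAt).continuousWithinAt
  have hclosed : IsClosed {x ∈ Set.Icc z₁ z₂ | u x = 0} := by
    have := hcont.preimage_isClosed_of_isClosed isClosed_Icc (isClosed_singleton (x := (0:ℝ)))
    simpa [Set.preimage, Set.inter_comm, Set.inter_def] using this
  have hcclos : c ∈ closure T := csSup_mem_closure ⟨z₁, hTne⟩ hTbdd
  have hcz : u c = 0 := by
    have hTsub : T ⊆ {x ∈ Set.Icc z₁ z₂ | u x = 0} := by
      rintro x ⟨hx1, hx2⟩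
      exact ⟨⟨hx1.1, hx1.2.le⟩, hx2⟩
    have := (hclosed.closure_subset_iff.mpr hTsub) hcclos
    exact this.2
  rcases eq_or_lt_of_le hcle with hceq | hclt
  · -- zeros accumulate at z₂ : u' z₂ = 0, then u ≡ 0
    have hz₂T : z₂ ∉ T := fun h => absurd h.1.2 (lt_irrefl z₂)
    have hne : (nhdsWithin z₂ T).NeBot := by
      rw [← mem_closure_iff_nhdsWithin_neBot]
      rw [← hceq]; exact hcclos
    have hslope : Tendsto (slope u z₂) (nhdsWithin z₂ T) (nhds (u' z₂)) :=
      (hasDerivAt_iff_tendsto_slope.mp (hu z₂ hz₂)).mono_left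
        (nhdsWithin_mono z₂ (fun x hx => ne_of_lt hx.1.2))
    have hzero : Tendsto (slope u z₂) (nhdsWithin z₂ T) (nhds 0) := by
      apply Tendsto.congr' _ tendsto_const_nhds
      filter_upwards [self_mem_nhdsWithin] with x hx
      rw [slope_def_field, hx.2, h2]
      simp
    have hu'z₂ : u' z₂ = 0 := tendsto_nhds_unique hslope hzero
    exact hur₀ (aux0 ν a hν ha u u' u'' hu hu' heq z₂ hz₂ h2 hu'z₂ r₀ hr₀)
  · -- c < z₂ and u ≠ 0 on (c, z₂)
    have hne0 : ∀ x ∈ Set.Ioo c z₂, u x ≠ 0 := by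
      rintro x hx hx0
      have hxT : x ∈ T := ⟨Set.mem_Ico.mpr ⟨le_trans hcge hx.1.le, hx.2⟩, hx0⟩
      exact absurd (le_csSup hTbdd hxT) (not_le.mpr hx.1)
    have hsub2 : Set.Icc c z₂ ⊆ Set.Ioo a (a + Real.pi) := Set.Icc_subset_Ioo hcI.1 hz₂.2
    have hcont2 : ContinuousOn u (Set.Icc c z₂) :=
      fun r hr => ((hu r (hsub2 hr)).continuousAt).continuousWithinAt
    have hdist : z₂ - c < Real.pi := by
      have := hz₂.2; have := hcI.1; linarith
    -- sign dichotomy via IVT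
    have hsign : (∀ x ∈ Set.Ioo c z₂, 0 < u x) ∨ (∀ x ∈ Set.Ioo c z₂, u x < 0) := by
      by_contra hcon
      push_neg at hcon
      obtain ⟨⟨x, hx, hx0⟩, ⟨y, hy, hy0⟩⟩ := hcon
      have hxneg : u x < 0 := lt_of_le_of_ne hx0 (hne0 x hx)
      have hypos : 0 < u y := lt_of_le_of_ne hy0 (Ne.symm (hne0 y hy))
      rcases le_total x y with hxy | hxy
      · have hivt := intermediate_value_Icc hxy (hcont2.mono
          (Set.Icc_subset_Icc hx.1.le hy.2.le))
        have : (0:ℝ) ∈ Set.Icc (u x) (u y) := Set.mem_Icc.mpr ⟨hxneg.le, hypos.le⟩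
        obtain ⟨w, hw, hw0⟩ := hivt this
        exact hne0 w ⟨lt_of_lt_of_le hx.1 hw.1, lt_of_le_of_lt hw.2 hy.2⟩ hw0
      · have hivt := intermediate_value_Icc' hxy (hcont2.mono
          (Set.Icc_subset_Icc hy.1.le hx.2.le))
        have : (0:ℝ) ∈ Set.Icc (u x) (u y) := Set.mem_Icc.mpr ⟨hxneg.le, hypos.le⟩
        obtain ⟨w, hw, hw0⟩ := hivt this
        exact hne0 w ⟨lt_of_lt_of_le hy.1 hw.1, lt_of_le_of_lt hw.2 hx.2⟩ hw0
    rcases hsign with hp | hn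
    · exact aux1 ν hν c z₂ hclt hdist (lt_trans ha hcI.1) u u' u''
        (fun r hr => hu r (hsub2 hr)) (fun r hr => hu' r (hsub2 hr))
        (fun r hr => heq r (hsub2 hr)) hcz h2 hp
    · exact aux1 ν hν c z₂ hclt hdist (lt_trans ha hcI.1) (fun r => -u r)
        (fun r => -u' r) (fun r => -u'' r)
        (fun r hr => (hu r (hsub2 hr)).neg) (fun r hr => (hu' r (hsub2 hr)).neg)
        (fun r hr => by have := heq r (hsub2 hr); linarith)
        (by simp [hcz]) (by simp [h2])
        (fun r hr => by have := hn r hr; linarith)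

theorem stmt14 (ν a : ℝ) (hν : 0 < ν) (ha : 0 < a) (u u' u'' : ℝ → ℝ)
    (hu : ∀ r ∈ Set.Ioo a (a + Real.pi), HasDerivAt u (u' r) r)
    (hu' : ∀ r ∈ Set.Ioo a (a + Real.pi), HasDerivAt u' (u'' r) r)
    (heq : ∀ r ∈ Set.Ioo a (a + Real.pi), u'' r + (1 - ν / r^2) * u r = 0)
    (hnz : ∃ r ∈ Set.Ioo a (a + Real.pi), u r ≠ 0) :
    ¬ ∃ z₁ z₂ : ℝ, z₁ ∈ Set.Ioo a (a + Real.pi) ∧ z₂ ∈ Set.Ioo a (a + Real.pi) ∧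
      z₁ ≠ z₂ ∧ u z₁ = 0 ∧ u z₂ = 0 := by
  rintro ⟨z₁, z₂, hz₁, hz₂, hne, h1, h2⟩
  rcases hne.lt_or_gt with hlt | hlt
  · exact ordered_case ν a hν ha u u' u'' hu hu' heq hnz z₁ z₂ hz₁ hz₂ hlt h1 h2
  · exact ordered_case ν a hν ha u u' u'' hu hu' heq hnz z₂ z₁ hz₂ hz₁ hlt h2 h1
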